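/- arXiv:1707.09267 — 2 statements merged into one kernel-verified Lean document; each statement's English description precedes it below -/
import Mathlib

section
/- Through any five points in the projective plane, no four of which are collinear, there passes a conic; if no three of the five points are collinear, this conic is unique and nondegenerate. -/
open Projectivization

/-- The real projective plane. -/
abbrev P2 := Projectivization ℝ (Fin 3 → ℝ)

/-- Three points of `ℙ²(ℝ)` are collinear iff their representatives are linearly dependent. -/
def Collin3 (p q r : P2) : Prop :=
  ¬ LinearIndependent ℝ ![p.rep, q.rep, r.rep]

/-- A point lies on the conic defined by a quadratic form `Q`. -/
def OnConic (Q : QuadraticForm ℝ (Fin 3 → ℝ)) (p : P2) : Prop := Q p.rep = 0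

noncomputable def auxB (c : Fin 6 → ℝ) : LinearMap.BilinMap ℝ (Fin 3 → ℝ) ℝ :=
  LinearMap.mk₂ ℝ (fun v w => c 0 * (v 0 * w 0) + c 1 * (v 1 * w 1) + c 2 * (v 2 * w 2)
      + c 3 * (v 0 * w 1) + c 4 * (v 0 * w 2) + c 5 * (v 1 * w 2))
    (fun m n u => by simp only [Pi.add_apply]; ring)
    (fun s m u => by simp only [Pi.smul_apply, smul_eq_mul]; ring)
    (fun m n u => by simp only [Pi.add_apply]; ring)
    (fun s m u => by simp only [Pi.smul_apply, smul_eq_mul]; ring)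

noncomputable def auxL : (Fin 6 → ℝ) →ₗ[ℝ] QuadraticForm ℝ (Fin 3 → ℝ) where
  toFun c := (auxB c).toQuadraticMap
  map_add' c c' := by
    ext u
    simp only [auxB, LinearMap.BilinMap.toQuadraticMap_apply, LinearMap.mk₂_apply,
      QuadraticMap.add_apply, Pi.add_apply]
    ring
  map_smul' r c := by
    ext u
    simp only [auxB, LinearMap.BilinMap.toQuadraticMap_apply, LinearMap.mk₂_apply,
      QuadraticMap.smul_apply, Pi.smul_apply, smul_eq_mul, RingHom.id_apply]
    ring

theorem auxL_apply (c : Fin 6 → ℝ) (u : Fin 3 → ℝ) :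
    auxL c u = c 0 * (u 0 * u 0) + c 1 * (u 1 * u 1) + c 2 * (u 2 * u 2)
      + c 3 * (u 0 * u 1) + c 4 * (u 0 * u 2) + c 5 * (u 1 * u 2) := rfl

theorem auxL_inj (c : Fin 6 → ℝ) (h : auxL c = 0) : c = 0 := by
  have e : ∀ u : Fin 3 → ℝ, auxL c u = 0 := fun u => by rw [h]; rfl
  have h0 := e ![1,0,0]
  have h1 := e ![0,1,0]
  have h2 := e ![0,0,1]
  have h3 := e ![1,1,0]
  have h4 := e ![1,0,1]
  have h5 := e ![0,1,1]
  simp [auxL_apply, Matrix.cons_val_zero, Matrix.cons_val_one] at h0 h1 h2 h3 h4 h5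
  funext i
  fin_cases i <;> simp <;> linarith

theorem exists_conic (v : Fin 5 → (Fin 3 → ℝ)) :
    ∃ Q : QuadraticForm ℝ (Fin 3 → ℝ), Q ≠ 0 ∧ ∀ i, Q (v i) = 0 := by
  let ψ : (Fin 6 → ℝ) →ₗ[ℝ] (Fin 5 → ℝ) :=
    { toFun := fun c => fun i => auxL c (v i)
      map_add' := fun c c' => by
        funext i; simp [map_add, QuadraticMap.add_apply]
      map_smul' := fun r c => by
        funext i; simp [map_smul, QuadraticMap.smul_apply, smul_eq_mul] }
  have hker : LinearMap.ker ψ ≠ ⊥ := by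
    intro hbot
    have hinj : Function.Injective ψ := LinearMap.ker_eq_bot.mp hbot
    have := LinearMap.finrank_le_finrank_of_injective hinj
    simp [Module.finrank_pi] at this
  obtain ⟨c, hc, hc0⟩ := Submodule.ne_bot_iff _ |>.mp hker
  refine ⟨auxL c, fun h0 => hc0 (auxL_inj c h0), fun i => ?_⟩
  have := congrFun hc i
  exact this

lemma dep_helper {u w x : Fin 3 → ℝ} (h : LinearIndependent ℝ ![u, w, x]) {α β γ : ℝ}
    (hrel : α • u + β • w + γ • x = 0) : α = 0 ∧ β = 0 ∧ γ = 0 := by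
  rw [Fintype.linearIndependent_iff] at h
  have := h ![α, β, γ] (by simpa [Fin.sum_univ_three] using hrel)
  exact ⟨this 0, this 1, this 2⟩

lemma expandB (Q : QuadraticForm ℝ (Fin 3 → ℝ)) (u0 u1 u2 : Fin 3 → ℝ) (a0 a1 a2 : ℝ)
    (h00 : QuadraticMap.associated (R := ℝ) Q u0 u0 = 0)
    (h11 : QuadraticMap.associated (R := ℝ) Q u1 u1 = 0)
    (h22 : QuadraticMap.associated (R := ℝ) Q u2 u2 = 0)
    (hsym : ∀ x y, QuadraticMap.associated (R := ℝ) Q x y = QuadraticMap.associated (R := ℝ) Q y x)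
    (hq : Q (a0 • u0 + a1 • u1 + a2 • u2) = 0) :
    a0*a1*(QuadraticMap.associated (R := ℝ) Q u0 u1) + a0*a2*(QuadraticMap.associated (R := ℝ) Q u0 u2)
      + a1*a2*(QuadraticMap.associated (R := ℝ) Q u1 u2) = 0 := by
  set B := QuadraticMap.associated (R := ℝ) Q with hB
  have h := (QuadraticMap.associated_eq_self_apply ℝ Q (a0 • u0 + a1 • u1 + a2 • u2)).trans hq
  rw [← hB] at h
  simp only [map_add, _root_.map_smul, LinearMap.map_smul, LinearMap.add_apply,
    LinearMap.smul_apply, smul_eq_mul] at h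
  rw [h00, h11, h22, hsym u1 u0, hsym u2 u0, hsym u2 u1] at h
  ring_nf at h ⊢
  linarith
lemma key (v : Fin 5 → (Fin 3 → ℝ))
    (h3 : ∀ i j k : Fin 5, i ≠ j → i ≠ k → j ≠ k → LinearIndependent ℝ ![v i, v j, v k])
    (Q : QuadraticForm ℝ (Fin 3 → ℝ)) (hQ0 : Q ≠ 0) (hQv : ∀ i, Q (v i) = 0) :
    (∀ u : Fin 3 → ℝ, (∀ w, QuadraticMap.polar Q u w = 0) → u = 0) ∧
    (∀ Q' : QuadraticForm ℝ (Fin 3 → ℝ), Q' ≠ 0 → (∀ i, Q' (v i) = 0) →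
      ∃ c : ℝ, c ≠ 0 ∧ Q' = c • Q) := by
  have hsymAll : ∀ (Q'' : QuadraticForm ℝ (Fin 3 → ℝ)) (x y : Fin 3 → ℝ),
      QuadraticMap.associated (R := ℝ) Q'' x y = QuadraticMap.associated (R := ℝ) Q'' y x :=
    fun Q'' x y => by simpa using (QuadraticMap.associated_isSymm ℝ Q'' x y)
  have hdiagAll : ∀ (Q'' : QuadraticForm ℝ (Fin 3 → ℝ)), (∀ i, Q'' (v i) = 0) →
      ∀ i, QuadraticMap.associated (R := ℝ) Q'' (v i) (v i) = 0 :=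
    fun Q'' h i => (QuadraticMap.associated_eq_self_apply ℝ Q'' (v i)).trans (h i)
  -- basis from the first three points
  have hli : LinearIndependent ℝ ![v 0, v 1, v 2] := h3 0 1 2 (by decide) (by decide) (by decide)
  let b : Module.Basis (Fin 3) ℝ (Fin 3 → ℝ) :=
    basisOfLinearIndependentOfCardEqFinrank hli (by simp)
  have hb : ∀ i : Fin 3, b i = ![v 0, v 1, v 2] i := fun i => by
    rw [show b = _ from rfl, coe_basisOfLinearIndependentOfCardEqFinrank]
  have hrepr : ∀ u : Fin 3 → ℝ,
      (b.repr u 0) • v 0 + (b.repr u 1) • v 1 + (b.repr u 2) • v 2 = u := by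
    intro u
    have h := b.sum_repr u
    rw [Fin.sum_univ_three, hb 0, hb 1, hb 2] at h
    simpa using h
  set a0 := b.repr (v 3) 0 with ha0def
  set a1 := b.repr (v 3) 1 with ha1def
  set a2 := b.repr (v 3) 2 with ha2def
  set d0 := b.repr (v 4) 0 with hd0def
  set d1 := b.repr (v 4) 1 with hd1def
  set d2 := b.repr (v 4) 2 with hd2def
  have hv3 : v 3 = a0 • v 0 + a1 • v 1 + a2 • v 2 := (hrepr (v 3)).symm
  have hv4 : v 4 = d0 • v 0 + d1 • v 1 + d2 • v 2 := (hrepr (v 4)).symm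
  -- all six coefficients are nonzero
  have ha0 : a0 ≠ 0 := fun h0 => by
    have hrel : a1 • v 1 + a2 • v 2 + (-1 : ℝ) • v 3 = 0 := by rw [hv3, h0]; module
    exact absurd (dep_helper (h3 1 2 3 (by decide) (by decide) (by decide)) hrel).2.2 (by norm_num)
  have ha1 : a1 ≠ 0 := fun h0 => by
    have hrel : a0 • v 0 + a2 • v 2 + (-1 : ℝ) • v 3 = 0 := by rw [hv3, h0]; module
    exact absurd (dep_helper (h3 0 2 3 (by decide) (by decide) (by decide)) hrel).2.2 (by norm_num)
  have ha2 : a2 ≠ 0 := fun h0 => by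
    have hrel : a0 • v 0 + a1 • v 1 + (-1 : ℝ) • v 3 = 0 := by rw [hv3, h0]; module
    exact absurd (dep_helper (h3 0 1 3 (by decide) (by decide) (by decide)) hrel).2.2 (by norm_num)
  have hd0 : d0 ≠ 0 := fun h0 => by
    have hrel : d1 • v 1 + d2 • v 2 + (-1 : ℝ) • v 4 = 0 := by rw [hv4, h0]; module
    exact absurd (dep_helper (h3 1 2 4 (by decide) (by decide) (by decide)) hrel).2.2 (by norm_num)
  have hd1 : d1 ≠ 0 := fun h0 => by
    have hrel : d0 • v 0 + d2 • v 2 + (-1 : ℝ) • v 4 = 0 := by rw [hv4, h0]; module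
    exact absurd (dep_helper (h3 0 2 4 (by decide) (by decide) (by decide)) hrel).2.2 (by norm_num)
  have hd2 : d2 ≠ 0 := fun h0 => by
    have hrel : d0 • v 0 + d1 • v 1 + (-1 : ℝ) • v 4 = 0 := by rw [hv4, h0]; module
    exact absurd (dep_helper (h3 0 1 4 (by decide) (by decide) (by decide)) hrel).2.2 (by norm_num)
  -- the three 2x2 minors are nonzero
  have hm2 : a0*d1 - a1*d0 ≠ 0 := fun h0 => by
    have hrel : (a0*d2 - d0*a2) • v 2 + d0 • v 3 + (-a0) • v 4 = 0 := by
      rw [hv3, hv4]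
      match_scalars <;> (first | ring1 | linear_combination h0 | linear_combination -h0)
    exact absurd (dep_helper (h3 2 3 4 (by decide) (by decide) (by decide)) hrel).2.2
      (neg_ne_zero.mpr ha0)
  have hm1 : a0*d2 - a2*d0 ≠ 0 := fun h0 => by
    have hrel : (a0*d1 - d0*a1) • v 1 + d0 • v 3 + (-a0) • v 4 = 0 := by
      rw [hv3, hv4]
      match_scalars <;> (first | ring1 | linear_combination h0 | linear_combination -h0)
    exact absurd (dep_helper (h3 1 3 4 (by decide) (by decide) (by decide)) hrel).2.2
      (neg_ne_zero.mpr ha0)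
  have hm0 : a1*d2 - a2*d1 ≠ 0 := fun h0 => by
    have hrel : (a1*d0 - d1*a0) • v 0 + d1 • v 3 + (-a1) • v 4 = 0 := by
      rw [hv3, hv4]
      match_scalars <;> (first | ring1 | linear_combination h0 | linear_combination -h0)
    exact absurd (dep_helper (h3 0 3 4 (by decide) (by decide) (by decide)) hrel).2.2
      (neg_ne_zero.mpr ha1)
  set W1 := a2*d2*(a0*d1 - a1*d0) with hW1def
  set W2 := -(a1*d1*(a0*d2 - a2*d0)) with hW2def
  set W3 := a0*d0*(a1*d2 - a2*d1) with hW3def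
  have hW1 : W1 ≠ 0 := mul_ne_zero (mul_ne_zero ha2 hd2) hm2
  have hW2 : W2 ≠ 0 := neg_ne_zero.mpr (mul_ne_zero (mul_ne_zero ha1 hd1) hm1)
  have hW3 : W3 ≠ 0 := mul_ne_zero (mul_ne_zero ha0 hd0) hm0
  have hprop : ∀ x y z : ℝ, a0*a1*x + a0*a2*y + a1*a2*z = 0 →
      d0*d1*x + d0*d2*y + d1*d2*z = 0 → x*W2 = y*W1 ∧ x*W3 = z*W1 := by
    intro x y z h1 h2
    constructor
    · linear_combination (a1*a2)*h2 - (d1*d2)*h1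
    · linear_combination (d0*d2)*h1 - (a0*a2)*h2
  -- master facts for any nonzero quadratic form through the five points
  have keyfacts : ∀ Q'' : QuadraticForm ℝ (Fin 3 → ℝ), Q'' ≠ 0 → (∀ i, Q'' (v i) = 0) →
      (QuadraticMap.associated (R := ℝ) Q'' (v 0) (v 1) ≠ 0 ∧
       QuadraticMap.associated (R := ℝ) Q'' (v 0) (v 2) ≠ 0 ∧
       QuadraticMap.associated (R := ℝ) Q'' (v 1) (v 2) ≠ 0) ∧
      (QuadraticMap.associated (R := ℝ) Q'' (v 0) (v 1)) * W2
        = (QuadraticMap.associated (R := ℝ) Q'' (v 0) (v 2)) * W1 ∧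
      (QuadraticMap.associated (R := ℝ) Q'' (v 0) (v 1)) * W3
        = (QuadraticMap.associated (R := ℝ) Q'' (v 1) (v 2)) * W1 := by
    intro Q'' hQ''0 hQ''v
    set B := QuadraticMap.associated (R := ℝ) Q'' with hBdef
    set x := B (v 0) (v 1) with hxdef
    set y := B (v 0) (v 2) with hydef
    set z := B (v 1) (v 2) with hzdef
    have hdiag : ∀ i : Fin 5, B (v i) (v i) = 0 := hdiagAll Q'' hQ''v
    have hsym : ∀ x y : Fin 3 → ℝ, B x y = B y x := hsymAll Q''
    have E3 : a0*a1*x + a0*a2*y + a1*a2*z = 0 :=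
      expandB Q'' (v 0) (v 1) (v 2) a0 a1 a2 (hdiag 0) (hdiag 1) (hdiag 2) hsym
        (by rw [← hv3]; exact hQ''v 3)
    have E4 : d0*d1*x + d0*d2*y + d1*d2*z = 0 :=
      expandB Q'' (v 0) (v 1) (v 2) d0 d1 d2 (hdiag 0) (hdiag 1) (hdiag 2) hsym
        (by rw [← hv4]; exact hQ''v 4)
    obtain ⟨pxy, pxz⟩ := hprop x y z E3 E4
    have hsnz : ¬(x = 0 ∧ y = 0 ∧ z = 0) := by
      rintro ⟨hx0, hy0, hz0⟩
      have hB0 : B = 0 := by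
        refine b.ext fun i => ?_
        refine b.ext fun j => ?_
        simp only [LinearMap.zero_apply, hb]
        fin_cases i <;> fin_cases j
        · exact hdiag 0
        · exact hx0
        · exact hy0
        · show B (v 1) (v 0) = 0; rw [hsym]; exact hx0
        · exact hdiag 1
        · exact hz0
        · show B (v 2) (v 0) = 0; rw [hsym]; exact hy0
        · show B (v 2) (v 1) = 0; rw [hsym]; exact hz0
        · exact hdiag 2
      apply hQ''0
      have hQB : Q'' = B.toQuadraticMap := (QuadraticMap.toQuadraticMap_associated ℝ Q'').symm
      rw [hQB, hB0]
      ext u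
      simp [LinearMap.BilinMap.toQuadraticMap_apply]
    have hx : x ≠ 0 := by
      intro hx0
      have hy0 : y = 0 := by
        have : y * W1 = 0 := by rw [← pxy, hx0]; ring
        exact (mul_eq_zero.mp this).resolve_right hW1
      have hz0 : z = 0 := by
        have : z * W1 = 0 := by rw [← pxz, hx0]; ring
        exact (mul_eq_zero.mp this).resolve_right hW1
      exact hsnz ⟨hx0, hy0, hz0⟩
    have hy : y ≠ 0 := by
      intro hy0
      exact hW2 ((mul_eq_zero.mp (by rw [pxy, hy0, zero_mul] : x * W2 = 0)).resolve_left hx)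
    have hz : z ≠ 0 := by
      intro hz0
      exact hW3 ((mul_eq_zero.mp (by rw [pxz, hz0, zero_mul] : x * W3 = 0)).resolve_left hx)
    exact ⟨⟨hx, hy, hz⟩, pxy, pxz⟩
  obtain ⟨⟨hx, hy, hz⟩, pxy, pxz⟩ := keyfacts Q hQ0 hQv
  set B := QuadraticMap.associated (R := ℝ) Q with hBdef
  set x := B (v 0) (v 1) with hxdef
  set y := B (v 0) (v 2) with hydef
  set z := B (v 1) (v 2) with hzdef
  have hdiag : ∀ i : Fin 5, B (v i) (v i) = 0 := hdiagAll Q hQv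
  have hsym : ∀ x y : Fin 3 → ℝ, B x y = B y x := hsymAll Q
  constructor
  · -- nondegeneracy
    intro u hu
    have hBu : ∀ w, B u w = 0 := by
      intro w
      rw [hBdef, QuadraticMap.associated_apply]
      rw [show Q (u + w) - Q u - Q w = QuadraticMap.polar Q u w from rfl, hu w]
      simp
    set α := b.repr u 0 with hα'
    set β := b.repr u 1 with hβ'
    set γ := b.repr u 2 with hγ'
    have hurepr : α • v 0 + β • v 1 + γ • v 2 = u := hrepr u
    have expand1 : ∀ w, B (α • v 0 + β • v 1 + γ • v 2) w
        = α * B (v 0) w + β * B (v 1) w + γ * B (v 2) w := by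
      intro w
      simp only [map_add, _root_.map_smul, LinearMap.add_apply, LinearMap.smul_apply, smul_eq_mul]
    have e0 : β * x + γ * y = 0 := by
      have h := hBu (v 0); rw [← hurepr, expand1] at h
      rw [hdiag 0, hsym (v 1) (v 0), hsym (v 2) (v 0)] at h
      rw [← hxdef, ← hydef] at h; linarith
    have e1 : α * x + γ * z = 0 := by
      have h := hBu (v 1); rw [← hurepr, expand1] at h
      rw [hdiag 1, hsym (v 2) (v 1)] at h
      rw [← hxdef, ← hzdef] at h; linarith
    have e2 : α * y + β * z = 0 := by
      have h := hBu (v 2); rw [← hurepr, expand1] at h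
      rw [hdiag 2] at h
      rw [← hydef, ← hzdef] at h; linarith
    have hγ : γ = 0 := by
      have h2 : 2*(γ*(y*z)) = 0 := by linear_combination y*e1 - x*e2 + z*e0
      have h3 : γ*(y*z) = 0 := by linarith
      exact (mul_eq_zero.mp h3).resolve_right (mul_ne_zero hy hz)
    have hβ : β = 0 := by
      have h3 : β * x = 0 := by rw [hγ] at e0; linarith
      exact (mul_eq_zero.mp h3).resolve_right hx
    have hα : α = 0 := by
      have h3 : α * x = 0 := by rw [hγ] at e1; linarith
      exact (mul_eq_zero.mp h3).resolve_right hx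
    rw [← hurepr, hα, hβ, hγ]; simp
  · -- uniqueness
    intro Q' hQ'0 hQ'v
    obtain ⟨⟨hx', hy', hz'⟩, pxy', pxz'⟩ := keyfacts Q' hQ'0 hQ'v
    set B' := QuadraticMap.associated (R := ℝ) Q' with hB'def
    set x' := B' (v 0) (v 1) with hx'def
    set y' := B' (v 0) (v 2) with hy'def
    set z' := B' (v 1) (v 2) with hz'def
    have hdiag' : ∀ i : Fin 5, B' (v i) (v i) = 0 := hdiagAll Q' hQ'v
    have hsym' : ∀ x y : Fin 3 → ℝ, B' x y = B' y x := hsymAll Q'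
    refine ⟨x' / x, div_ne_zero hx' hx, ?_⟩
    have hxy : y' * x = x' * y :=
      mul_right_cancel₀ hW1 (by linear_combination x'*pxy - x*pxy')
    have hxz : z' * x = x' * z :=
      mul_right_cancel₀ hW1 (by linear_combination x'*pxz - x*pxz')
    have hBc : B' = (x'/x) • B := by
      refine b.ext fun i => ?_
      refine b.ext fun j => ?_
      simp only [LinearMap.smul_apply, smul_eq_mul, hb]
      fin_cases i <;> fin_cases j
      · show B' (v 0) (v 0) = x'/x * B (v 0) (v 0); rw [hdiag' 0, hdiag 0]; ring
      · show x' = x'/x * x; field_simp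
      · show y' = x'/x * y; field_simp; linear_combination hxy
      · show B' (v 1) (v 0) = x'/x * B (v 1) (v 0)
        rw [hsym' (v 1) (v 0), hsym (v 1) (v 0), ← hx'def, ← hxdef]; field_simp
      · show B' (v 1) (v 1) = x'/x * B (v 1) (v 1); rw [hdiag' 1, hdiag 1]; ring
      · show z' = x'/x * z; field_simp; linear_combination hxz
      · show B' (v 2) (v 0) = x'/x * B (v 2) (v 0)
        rw [hsym' (v 2) (v 0), hsym (v 2) (v 0), ← hy'def, ← hydef]; field_simp
        linear_combination hxy
      · show B' (v 2) (v 1) = x'/x * B (v 2) (v 1)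
        rw [hsym' (v 2) (v 1), hsym (v 2) (v 1), ← hz'def, ← hzdef]; field_simp
        linear_combination hxz
      · show B' (v 2) (v 2) = x'/x * B (v 2) (v 2); rw [hdiag' 2, hdiag 2]; ring
    have hQB : Q' = B'.toQuadraticMap := (QuadraticMap.toQuadraticMap_associated ℝ Q').symm
    rw [hQB, hBc]
    ext u
    simp only [LinearMap.BilinMap.toQuadraticMap_apply, LinearMap.smul_apply, smul_eq_mul,
      QuadraticMap.smul_apply]
    rw [hBdef, QuadraticMap.associated_eq_self_apply]

theorem stmt5 (p : Fin 5 → P2) (hinj : Function.Injective p)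
    (h4 : ∀ i j k l : Fin 5, i ≠ j → i ≠ k → i ≠ l → j ≠ k → j ≠ l → k ≠ l →
      ¬ (Collin3 (p i) (p j) (p k) ∧ Collin3 (p i) (p j) (p l) ∧
         Collin3 (p i) (p k) (p l) ∧ Collin3 (p j) (p k) (p l))) :
    (∃ Q : QuadraticForm ℝ (Fin 3 → ℝ), Q ≠ 0 ∧ ∀ i, OnConic Q (p i)) ∧
    ((∀ i j k : Fin 5, i ≠ j → i ≠ k → j ≠ k → ¬ Collin3 (p i) (p j) (p k)) →
      ∃ Q : QuadraticForm ℝ (Fin 3 → ℝ), Q ≠ 0 ∧ (∀ i, OnConic Q (p i)) ∧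
        (∀ v : Fin 3 → ℝ, (∀ w, QuadraticMap.polar Q v w = 0) → v = 0) ∧
        ∀ Q' : QuadraticForm ℝ (Fin 3 → ℝ), Q' ≠ 0 → (∀ i, OnConic Q' (p i)) →
          ∃ c : ℝ, c ≠ 0 ∧ Q' = c • Q) := by
  obtain ⟨Q, hQ0, hQv⟩ := exists_conic (fun i => (p i).rep)
  refine ⟨⟨Q, hQ0, fun i => hQv i⟩, fun h3 => ?_⟩
  have h3' : ∀ i j k : Fin 5, i ≠ j → i ≠ k → j ≠ k →
      LinearIndependent ℝ ![(p i).rep, (p j).rep, (p k).rep] := fun i j k hij hik hjk =>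
    not_not.mp (h3 i j k hij hik hjk)
  obtain ⟨hnd, huniq⟩ := key (fun i => (p i).rep) h3' Q hQ0 hQv
  exact ⟨Q, hQ0, fun i => hQv i, hnd, fun Q' hQ'0 hQ'v => huniq Q' hQ'0 fun i => hQ'v i⟩
end

section
/- Kasner's theorem for regular pentagons: for a regular pentagon P centered at the origin, the pentagon D(P) formed by the intersection points of the diagonals and the pentagon I(P) formed by the tangency points of the inscribed circle satisfy I(D(P)) = D(I(P)); both are regular pentagons and both operations act on regular pentagons as a rotation composed with a dilation, hence commute. -/
open Real

/-- Vertex `j` of the regular `n`-gon of circumradius `r` and phase `φ`. -/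
noncomputable def vert (n : ℕ) (r φ : ℝ) (j : ℤ) : ℝ × ℝ :=
  (r * cos (2 * π * j / n + φ), r * sin (2 * π * j / n + φ))

/-- The line through two points of the plane. -/
def lineThrough (p q : ℝ × ℝ) : Set (ℝ × ℝ) := {x | ∃ t : ℝ, x = p + t • (q - p)}

/-- `w` is the polygon of consecutive intersection points of `k`-diagonals of `v`. -/
def IsDiagPoly (k : ℕ) (v w : ℤ → ℝ × ℝ) : Prop :=
  ∀ j : ℤ, w j ∈ lineThrough (v j) (v (j + k)) ∩ lineThrough (v (j + 1)) (v (j + k + 1))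

/-- The polygon of midpoints of consecutive sides (tangency points with the
inscribed circle, for a regular polygon centered at the origin). -/
noncomputable def midPoly (v : ℤ → ℝ × ℝ) : ℤ → ℝ × ℝ :=
  fun j => (1 / 2 : ℝ) • (v j + v (j + 1))

/- ### auxiliary lemmas -/

lemma vert_base (r φ : ℝ) (j : ℤ) :
    vert 5 r φ j = (r * cos (2 * π * (j : ℝ) / 5 + φ), r * sin (2 * π * (j : ℝ) / 5 + φ)) := by
  unfold vert
  norm_num

lemma vert_shift (r φ : ℝ) (j k : ℤ) (c : ℝ) (hc : (k : ℝ) * (2 * π / 5) = c) :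
    vert 5 r φ (j + k) =
      (r * (cos (2 * π * (j : ℝ) / 5 + φ) * cos c - sin (2 * π * (j : ℝ) / 5 + φ) * sin c),
       r * (sin (2 * π * (j : ℝ) / 5 + φ) * cos c + cos (2 * π * (j : ℝ) / 5 + φ) * sin c)) := by
  unfold vert
  have h : 2 * π * ((j + k : ℤ) : ℝ) / ((5 : ℕ) : ℝ) + φ = (2 * π * (j : ℝ) / 5 + φ) + c := by
    rw [← hc]; push_cast; ring
  rw [h, cos_add (2 * π * (j : ℝ) / 5 + φ) c, sin_add (2 * π * (j : ℝ) / 5 + φ) c]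

lemma xpos : 0 < cos (π / 5) := by
  apply cos_pos_of_mem_Ioo
  constructor <;> nlinarith [pi_pos]

lemma spos : 0 < sin (π / 5) := by
  apply sin_pos_of_pos_of_lt_pi <;> nlinarith [pi_pos]

lemma xquad : 4 * cos (π / 5) ^ 2 = 2 * cos (π / 5) + 1 := by
  have h3 : cos (3 * (π / 5)) = -cos (2 * (π / 5)) := by
    rw [show 3 * (π / 5) = π - 2 * (π / 5) by ring, cos_pi_sub]
  rw [cos_three_mul, cos_two_mul] at h3
  have hfac : (cos (π / 5) + 1) * (4 * cos (π / 5) ^ 2 - 2 * cos (π / 5) - 1) = 0 := by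
    linear_combination h3
  have h1 : cos (π / 5) + 1 ≠ 0 := by nlinarith [xpos]
  have := (mul_eq_zero.mp hfac).resolve_left h1
  linarith

lemma xlt : cos (π / 5) < 1 := by nlinarith [xquad, xpos]

lemma hc1 : ((1 : ℤ) : ℝ) * (2 * π / 5) = 2 * (π / 5) := by push_cast; ring

lemma hc2 : ((2 : ℤ) : ℝ) * (2 * π / 5) = 2 * (2 * (π / 5)) := by push_cast; ring

lemma hc3 : ((3 : ℤ) : ℝ) * (2 * π / 5) = π / 5 + π := by push_cast; ring

/-- The midpoint pentagon of a regular pentagon. -/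
lemma mid_master (r φ : ℝ) :
    midPoly (vert 5 r φ) = vert 5 (cos (π / 5) * r) (φ + π / 5) := by
  funext j
  unfold midPoly
  rw [vert_base r φ j, vert_shift r φ j 1 (2 * (π / 5)) hc1,
    vert_base (cos (π / 5) * r) (φ + π / 5) j,
    show 2 * π * (j : ℝ) / 5 + (φ + π / 5) = (2 * π * (j : ℝ) / 5 + φ) + π / 5 by ring,
    cos_add (2 * π * (j : ℝ) / 5 + φ) (π / 5), sin_add (2 * π * (j : ℝ) / 5 + φ) (π / 5),
    cos_two_mul, sin_two_mul]
  simp only [Prod.smul_mk, Prod.mk_add_mk, smul_eq_mul, Prod.mk.injEq]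
  constructor <;> ring

/-- The diagonal pentagon of a regular pentagon. -/
lemma diag_master (r φ : ℝ) (hr : 0 < r) (d : ℤ → ℝ × ℝ)
    (h : IsDiagPoly 2 (vert 5 r φ) d) :
    d = vert 5 ((2 - 2 * cos (π / 5)) * r) (φ + 3 * π / 5) := by
  funext j
  obtain ⟨⟨t, ht⟩, ⟨u, hu⟩⟩ := h j
  push_cast at ht hu
  rw [show (j : ℤ) + 2 + 1 = j + 3 by ring] at hu
  rw [vert_base r φ j, vert_shift r φ j 2 (2 * (2 * (π / 5))) hc2,
    cos_two_mul, sin_two_mul, cos_two_mul, sin_two_mul] at ht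
  rw [vert_shift r φ j 1 (2 * (π / 5)) hc1, vert_shift r φ j 3 (π / 5 + π) hc3,
    cos_add_pi, sin_add_pi, cos_two_mul, sin_two_mul] at hu
  rw [vert_base ((2 - 2 * cos (π / 5)) * r) (φ + 3 * π / 5) j,
    show 2 * π * (j : ℝ) / 5 + (φ + 3 * π / 5) =
      (2 * π * (j : ℝ) / 5 + φ) + (2 * (π / 5) + π / 5) by ring,
    cos_add (2 * π * (j : ℝ) / 5 + φ) (2 * (π / 5) + π / 5),
    sin_add (2 * π * (j : ℝ) / 5 + φ) (2 * (π / 5) + π / 5),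
    cos_add (2 * (π / 5)) (π / 5), sin_add (2 * (π / 5)) (π / 5),
    cos_two_mul, sin_two_mul]
  set x := cos (π / 5) with hxdef
  set s := sin (π / 5) with hsdef
  set a := cos (2 * π * (j : ℝ) / 5 + φ) with hadef
  set b := sin (2 * π * (j : ℝ) / 5 + φ) with hbdef
  have hx2 : 4 * x ^ 2 = 2 * x + 1 := xquad
  have hs2 : s ^ 2 + x ^ 2 = 1 := sin_sq_add_cos_sq _
  have hab : a ^ 2 + b ^ 2 = 1 := by rw [hadef, hbdef]; exact cos_sq_add_sin_sq _
  have ht1 := congrArg Prod.fst ht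
  have ht2 := congrArg Prod.snd ht
  have hu1 := congrArg Prod.fst hu
  have hu2 := congrArg Prod.snd hu
  simp only [Prod.fst_add, Prod.snd_add, Prod.fst_sub, Prod.snd_sub, Prod.smul_fst,
    Prod.smul_snd, smul_eq_mul] at ht1 ht2 hu1 hu2
  have he1 := ht1.symm.trans hu1
  have he2 := ht2.symm.trans hu2
  have key : (t - (2 * x - 1)) * (32 * r ^ 2 * s ^ 3 * x ^ 3) = 0 := by
    linear_combination
      (b*r - b*x*r - 2*b*x^2*r - a*s*r - 2*a*s*x*r) * he1 +
      (-(b*s*r) - 2*b*s*x*r - a*r + a*x*r + 2*a*x^2*r) * he2 +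
      (2*s*r^2 + 2*s*x*r^2 - 4*s*x*r^2*t - 4*s*x^2*r^2*t) * hab +
      (32*s*x^3*r^2 + 32*s*x^3*r^2*t - 64*s*x^4*r^2) * hs2 +
      (-(2*s*r^2) + 2*s*x*r^2 + 4*s*x*r^2*t - 12*s*x^2*r^2 - 4*s*x^2*r^2*t
        - 8*s*x^3*r^2*t + 16*s*x^4*r^2) * hx2
  have hpos : 0 < 32 * r ^ 2 * s ^ 3 * x ^ 3 :=
    mul_pos (mul_pos (mul_pos (by norm_num) (pow_pos hr 2)) (pow_pos spos 3)) (pow_pos xpos 3)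
  have htg : t = 2 * x - 1 := by
    rcases mul_eq_zero.mp key with h | h
    · linarith
    · exact absurd h (ne_of_gt hpos)
  rw [htg] at ht1 ht2
  rw [Prod.ext_iff]
  constructor
  · linear_combination ht1 + (4*a*x*r - 4*a*x^2*r) * hs2 +
      (2*b*s*r - 2*b*s*x*r - 4*b*s*x^2*r - a*r - 4*a*x*r + 2*a*x^2*r + 4*a*x^3*r) * hx2
  · linear_combination ht2 + (4*b*x*r - 4*b*x^2*r) * hs2 +
      (-(b*r) - 4*b*x*r + 2*b*x^2*r + 4*b*x^3*r - 2*a*s*r + 2*a*s*x*r + 4*a*s*x^2*r) * hx2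

theorem stmt14 (r φ : ℝ) (hr : 0 < r) :
    -- I(D(P)) = D(I(P))
    (∀ d di : ℤ → ℝ × ℝ, IsDiagPoly 2 (vert 5 r φ) d →
      IsDiagPoly 2 (midPoly (vert 5 r φ)) di → midPoly d = di) ∧
    -- D(P) is regular
    (∀ d : ℤ → ℝ × ℝ, IsDiagPoly 2 (vert 5 r φ) d →
      ∃ r' φ' : ℝ, 0 < r' ∧ d = vert 5 r' φ') ∧
    -- I(P) is regular
    (∃ r' φ' : ℝ, 0 < r' ∧ midPoly (vert 5 r φ) = vert 5 r' φ') ∧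
    -- D acts on regular pentagons as a rotation composed with a dilation
    (∃ cD θD : ℝ, 0 < cD ∧ ∀ r' φ' : ℝ, 0 < r' → ∀ d : ℤ → ℝ × ℝ,
      IsDiagPoly 2 (vert 5 r' φ') d → d = vert 5 (cD * r') (φ' + θD)) ∧
    -- I acts on regular pentagons as a rotation composed with a dilation
    (∃ cI θI : ℝ, 0 < cI ∧ ∀ r' φ' : ℝ,
      midPoly (vert 5 r' φ') = vert 5 (cI * r') (φ' + θI)) := by
  have hcD : 0 < 2 - 2 * cos (π / 5) := by nlinarith [xlt]
  refine ⟨?_, ?_, ?_, ?_, ?_⟩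
  · intro d di hd hdi
    have h1 := diag_master r φ hr d hd
    rw [mid_master r φ] at hdi
    have h3 := diag_master (cos (π / 5) * r) (φ + π / 5) (mul_pos xpos hr) di hdi
    rw [h1, mid_master, h3,
      show cos (π/5) * ((2 - 2 * cos (π/5)) * r) = (2 - 2 * cos (π/5)) * (cos (π/5) * r) by ring,
      show φ + 3 * π / 5 + π / 5 = φ + π / 5 + 3 * π / 5 by ring]
  · intro d hd
    exact ⟨(2 - 2 * cos (π / 5)) * r, φ + 3 * π / 5, mul_pos hcD hr, diag_master r φ hr d hd⟩
  · exact ⟨cos (π / 5) * r, φ + π / 5, mul_pos xpos hr, mid_master r φ⟩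
  · exact ⟨2 - 2 * cos (π / 5), 3 * π / 5, hcD,
      fun r' φ' hr' d hd => by
        exact diag_master r' φ' hr' d hd⟩
  · exact ⟨cos (π / 5), π / 5, xpos, fun r' φ' => mid_master r' φ'⟩
end
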